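/- For the Hantzsche–Wendt group Γ ≤ Isom(ℝ³) generated by the glide rotations α: (x,y,z) ↦ (x + a/2, −y, −z) and β: (x,y,z) ↦ (−x, y + b/2, −z) (a, b, c > 0, with α, β chosen so that the translation lattice is ℤ(a,0,0)+ℤ(0,b,0)+ℤ(0,0,c)), every translation t_v with 2v ∈ Λ and v ∉ Λ has the property that the group generated by Γ and t_v contains a nontrivial element with a fixed point in ℝ³. -/

import Mathlib

noncomputable section

/-- Euclidean space `E^n`. -/
abbrev E (n : ℕ) : Type := EuclideanSpace ℝ (Fin n)

/-- Discreteness of a group of isometries, expressed as proper discontinuity of its action. -/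
def IsDiscreteGrp {n : ℕ} (Γ : Subgroup (E n ≃ᵢ E n)) : Prop :=
  ∀ K : Set (E n), IsCompact K →
    {γ : E n ≃ᵢ E n | γ ∈ Γ ∧ ((γ '' K) ∩ K).Nonempty}.Finite

/-- Cocompactness of a group of isometries of `E^n`. -/
def IsCocompactGrp {n : ℕ} (Γ : Subgroup (E n ≃ᵢ E n)) : Prop :=
  ∃ K : Set (E n), IsCompact K ∧ ∀ x : E n, ∃ γ ∈ Γ, γ x ∈ K

/-- The action of `Γ` on `E^n` is free. -/
def ActsFreely {n : ℕ} (Γ : Subgroup (E n ≃ᵢ E n)) : Prop :=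
  ∀ γ ∈ Γ, (∃ x : E n, γ x = x) → γ = 1

/-- A crystallographic group: discrete and cocompact. -/
def IsCrystallographic {n : ℕ} (Γ : Subgroup (E n ≃ᵢ E n)) : Prop :=
  IsDiscreteGrp Γ ∧ IsCocompactGrp Γ

/-- A Bieberbach group: discrete, cocompact, acting freely. -/
def IsBieberbach {n : ℕ} (Γ : Subgroup (E n ≃ᵢ E n)) : Prop :=
  IsDiscreteGrp Γ ∧ IsCocompactGrp Γ ∧ ActsFreely Γ

/-- `f` is a translation. -/
def IsTranslation {n : ℕ} (f : E n ≃ᵢ E n) : Prop :=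
  ∃ a : E n, ∀ x : E n, f x = x + a

def sg (n : ℤ) : ℝ := if Even n then 1 else -1
def sgZ (n : ℤ) : ℤ := if Even n then 1 else -1
lemma sgZ_cast (n : ℤ) : ((sgZ n : ℤ) : ℝ) = sg n := by unfold sg sgZ; split <;> norm_num
lemma sg_even {n : ℤ} (h : Even n) : sg n = 1 := by simp [sg, h]
lemma sg_odd {n : ℤ} (h : Odd n) : sg n = -1 := by simp [sg, Int.not_even_iff_odd.mpr h]
lemma sg_congr {m n : ℤ} (h : Even (m - n)) : sg m = sg n := by
  unfold sg; rw [Int.even_sub] at h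
  by_cases h' : Even n
  · rw [if_pos (h.mpr h'), if_pos h']
  · rw [if_neg (fun hm => h' (h.mp hm)), if_neg h']
lemma sg_add (m n : ℤ) : sg (m + n) = sg m * sg n := by
  unfold sg
  rcases Int.even_or_odd m with h | h <;> rcases Int.even_or_odd n with h' | h' <;>
    simp [Int.even_add, h, h', Int.not_even_iff_odd.mpr, iff_true, iff_false]
lemma sgZ_sub_one_even (k : ℤ) : Even (sgZ k - 1) := by unfold sgZ; split <;> decide
lemma sg_sgZ_mul (k n : ℤ) : sg (sgZ k * n) = sg n := by
  apply sg_congr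
  have h1 : sgZ k * n - n = (sgZ k - 1) * n := by ring
  rw [h1]; exact (sgZ_sub_one_even k).mul_right n
lemma sg_neg (n : ℤ) : sg (-n) = sg n := by unfold sg; simp
lemma sg_mul_self (n : ℤ) : sg n * sg n = 1 := by unfold sg; split <;> norm_num

lemma mulc01 (h t : ℝ) (M N M' N' : ℤ) :
    sg N * (sg N' * t + ↑M' * h) + ↑M * h
      = sg (N + sgZ M * N') * t + ((M + sgZ N * M' : ℤ) : ℝ) * h := by
  rw [sg_add, sg_sgZ_mul]; push_cast [sgZ_cast]; ring

lemma mulc2 (c t : ℝ) (M N M' N' K K' : ℤ) :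
    sg (M + N) * (sg (M' + N') * t + ↑N' * (c/2) + ↑K' * c) + ↑N * (c/2) + ↑K * c
      = sg (M + sgZ N * M' + (N + sgZ M * N')) * t
        + ((N + sgZ M * N' : ℤ) : ℝ) * (c/2)
        + ((K + sgZ (M+N) * K' + (if Even N then 0 else -(sgZ M * N')) : ℤ) : ℝ) * c := by
  have e1 : sg (M + sgZ N * M' + (N + sgZ M * N')) = sg (M + N) * sg (M' + N') := by
    have he : Even ((M + sgZ N * M' + (N + sgZ M * N')) - (M + N + (M' + N'))) := by
      have h1 := (sgZ_sub_one_even N).mul_right M'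
      have h2 := (sgZ_sub_one_even M).mul_right N'
      have h3 : (M + sgZ N * M' + (N + sgZ M * N')) - (M + N + (M' + N'))
          = (sgZ N - 1) * M' + (sgZ M - 1) * N' := by ring
      rw [h3]; exact h1.add h2
    rw [sg_congr he, sg_add]
  rw [e1]
  rcases Int.even_or_odd N with hN | hN
  · rw [if_pos hN]
    have h2 : sg (M + N) = sg M := by rw [sg_add, sg_even hN, mul_one]
    push_cast [sgZ_cast]
    rw [h2]; ring
  · rw [if_neg (Int.not_even_iff_odd.mpr hN)]
    have h2 : sg (M + N) = -sg M := by rw [sg_add, sg_odd hN]; ring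
    push_cast [sgZ_cast]
    rw [h2]; ring

def HWP (a b c : ℝ) (g : E 3 ≃ᵢ E 3) : Prop :=
  ∃ M N K : ℤ, ∀ x : E 3,
    g x = ![sg N * x 0 + M * (a/2), sg M * x 1 + N * (b/2),
            sg (M + N) * x 2 + N * (c/2) + K * c]

lemma HWP_one {a b c : ℝ} : HWP a b c 1 := by
  refine ⟨0, 0, 0, fun x => ?_⟩
  show x.ofLp = _
  funext i
  fin_cases i <;> simp [sg]

lemma HWP_mul {a b c : ℝ} {g g' : E 3 ≃ᵢ E 3} (hg : HWP a b c g) (hg' : HWP a b c g') :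
    HWP a b c (g * g') := by
  obtain ⟨M, N, K, hgf⟩ := hg
  obtain ⟨M', N', K', hgf'⟩ := hg'
  refine ⟨M + sgZ N * M', N + sgZ M * N',
    K + sgZ (M+N) * K' + (if Even N then 0 else -(sgZ M * N')), fun x => ?_⟩
  show (g (g' x)).ofLp = _
  rw [hgf, hgf' x]
  funext i
  fin_cases i <;>
    simp only [Matrix.cons_val_zero, Matrix.cons_val_one, Matrix.head_cons,
      Matrix.cons_val_two, Matrix.tail_cons, Fin.isValue]
  · exact mulc01 (a/2) (x 0) M N M' N'
  · exact mulc01 (b/2) (x 1) N M N' M'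
  · exact mulc2 c (x 2) M N M' N' K K'

lemma HWP_inv {a b c : ℝ} {g : E 3 ≃ᵢ E 3} (hg : HWP a b c g) : HWP a b c g⁻¹ := by
  obtain ⟨M, N, K, hgf⟩ := hg
  refine ⟨-(sgZ N * M), -(sgZ M * N),
    (if Even N then 0 else sgZ M * N) - sgZ (M+N) * K, fun y => ?_⟩
  set F : E 3 := WithLp.toLp 2 ![sg (-(sgZ M * N)) * y 0 + (-(sgZ N * M) : ℤ) * (a/2),
      sg (-(sgZ N * M)) * y 1 + (-(sgZ M * N) : ℤ) * (b/2),
      sg ((-(sgZ N * M)) + (-(sgZ M * N))) * y 2 + (-(sgZ M * N) : ℤ) * (c/2)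
        + ((if Even N then 0 else sgZ M * N) - sgZ (M+N) * K : ℤ) * c] with hF
  have key : g F = y := by
    apply WithLp.ofLp_injective
    rw [hgf]
    have s0 : sg (-(sgZ M * N)) = sg N := by rw [sg_neg, sg_sgZ_mul]
    have s1 : sg (-(sgZ N * M)) = sg M := by rw [sg_neg, sg_sgZ_mul]
    have s2 : sg ((-(sgZ N * M)) + (-(sgZ M * N))) = sg (M + N) := by
      apply sg_congr
      have h3 : (-(sgZ N * M)) + (-(sgZ M * N)) - (M + N)
          = (-(sgZ N) - 1) * M + (-(sgZ M) - 1) * N := by ring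
      have h4 : Even (-(sgZ N) - 1) := by unfold sgZ; split <;> decide
      have h5 : Even (-(sgZ M) - 1) := by unfold sgZ; split <;> decide
      rw [h3]; exact (h4.mul_right M).add (h5.mul_right N)
    funext i
    fin_cases i <;>
      simp only [hF, Fin.zero_eta, Fin.mk_one, Fin.reduceFinMk, Matrix.cons_val_zero,
        Matrix.cons_val_one, Matrix.head_cons, Matrix.cons_val_two, Matrix.tail_cons,
        Fin.isValue, WithLp.ofLp_toLp]
    · rw [s0]
      push_cast [sgZ_cast]
      linear_combination (y 0 - (M : ℝ) * (a/2)) * sg_mul_self N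
    · rw [s1]
      push_cast [sgZ_cast]
      linear_combination (y 1 - (N : ℝ) * (b/2)) * sg_mul_self M
    · rw [s2]
      rcases Int.even_or_odd N with hN | hN
      · rw [if_pos hN]
        push_cast [sgZ_cast]
        rw [sg_add, sg_even hN, mul_one]
        linear_combination (y 2 - (N : ℝ) * (c/2) - (K : ℝ) * c) * sg_mul_self M
      · rw [if_neg (Int.not_even_iff_odd.mpr hN)]
        push_cast [sgZ_cast]
        rw [sg_add, sg_odd hN]
        linear_combination (y 2 + (N : ℝ) * (c/2) - (N : ℝ) * c - (K : ℝ) * c) * sg_mul_self M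
  show (g.symm y).ofLp = _
  conv_lhs => rw [← key]
  rw [IsometryEquiv.symm_apply_apply, hF]

lemma transl_inv {f : E 3 ≃ᵢ E 3} {w : E 3} (h : ∀ x, f x = x + w) :
    ∀ x : E 3, f⁻¹ x = x - w := by
  intro x
  have h2 : f (x - w) = x := by rw [h]; abel
  have h3 := congrArg f.symm h2
  show f.symm x = _
  simpa using h3.symm

lemma transl_zpow {f : E 3 ≃ᵢ E 3} {w : E 3} (h : ∀ x, f x = x + w) (m : ℤ) :
    ∀ x : E 3, (f ^ m) x = x + (m : ℝ) • w := by
  induction m using Int.induction_on with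
  | zero => intro x; simp
  | succ k ih =>
      intro x
      have h1 : f ^ ((k:ℤ) + 1) = f ^ (k:ℤ) * f := by rw [zpow_add_one]
      rw [h1]
      show (f ^ (k:ℤ)) (f x) = _
      rw [h, ih]
      push_cast
      module
  | pred k ih =>
      intro x
      have h1 : f ^ (-(k:ℤ) - 1) = f ^ (-(k:ℤ)) * f⁻¹ := by rw [zpow_sub_one]
      rw [h1]
      show (f ^ (-(k:ℤ))) (f⁻¹ x) = _
      rw [transl_inv h, ih]
      push_cast
      module

/-- for the Hantzsche–Wendt group `Γ` (fundamental group of `C₂,₂`),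
generated by `α : (x,y,z) ↦ (x + a/2, -y, -z)` and `β : (x,y,z) ↦ (-x, y + b/2, c/2 - z)`,
every translation `t_v` with `2v ∈ Λ` and `v ∉ Λ` is such that `⟨Γ, t_v⟩` contains a
nontrivial element with a fixed point. -/
theorem HW3_no_admissible_translation (a b c : ℝ) (ha : 0 < a) (hb : 0 < b) (hc : 0 < c)
    (α β : E 3 ≃ᵢ E 3)
    (hα : ∀ x : E 3, α x = ![x 0 + a / 2, -(x 1), -(x 2)])
    (hβ : ∀ x : E 3, β x = ![-(x 0), x 1 + b / 2, c / 2 - x 2])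
    (v : E 3) (τ : E 3 ≃ᵢ E 3) (hτ : ∀ x : E 3, τ x = x + v)
    (h2v : ∃ s ∈ Subgroup.closure {α, β}, ∀ x : E 3, s x = x + (2 : ℝ) • v)
    (hv : τ ∉ Subgroup.closure {α, β}) :
    ∃ γ ∈ Subgroup.closure ((Subgroup.closure {α, β} : Subgroup (E 3 ≃ᵢ E 3)) ∪ {τ} :
        Set (E 3 ≃ᵢ E 3)),
      γ ≠ 1 ∧ ∃ x : E 3, γ x = x := by
  -- notation
  set Γ : Subgroup (E 3 ≃ᵢ E 3) := Subgroup.closure {α, β} with hΓ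
  set G : Subgroup (E 3 ≃ᵢ E 3) := Subgroup.closure ((Γ : Set (E 3 ≃ᵢ E 3)) ∪ {τ}) with hG
  have hαΓ : α ∈ Γ := Subgroup.subset_closure (Set.mem_insert _ _)
  have hβΓ : β ∈ Γ := Subgroup.subset_closure (Set.mem_insert_of_mem _ rfl)
  have hΓG : ∀ g ∈ Γ, g ∈ G := fun g hg => Subgroup.subset_closure (Or.inl hg)
  have hτG : τ ∈ G := Subgroup.subset_closure (Or.inr rfl)
  have hαG : α ∈ G := hΓG α hαΓ
  have hβG : β ∈ G := hΓG β hβΓ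
  -- every element of Γ has the HW normal form
  have hPall : ∀ g ∈ Γ, HWP a b c g := by
    intro g hg
    refine Subgroup.closure_induction ?_ HWP_one (fun x y _ _ hx hy => HWP_mul hx hy)
      (fun x _ hx => HWP_inv hx) hg
    intro x hx
    rcases hx with hx | hx
    · subst hx
      refine ⟨1, 0, 0, fun x => ?_⟩
      rw [hα x]
      funext i
      fin_cases i <;>
        simp [sg, sgZ, (by decide : ¬ Even (1:ℤ)), (by decide : Even (0:ℤ))] <;> ring
    · rw [Set.mem_singleton_iff] at hx
      subst hx
      refine ⟨0, 1, 0, fun x => ?_⟩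
      rw [hβ x]
      funext i
      fin_cases i <;>
        simp [sg, sgZ, (by decide : ¬ Even (1:ℤ)), (by decide : Even (0:ℤ))] <;> ring
  -- the translation lattice constraint: v = (P a/2, Q b/2, R c/2)
  obtain ⟨s, hsΓ, hs⟩ := h2v
  obtain ⟨Ms, Ns, Ks, hform⟩ := hPall s hsΓ
  obtain ⟨q, hq⟩ : ∃ q : E 3, q = WithLp.toLp 2 ![1,1,1] := ⟨_, rfl⟩
  have key0 : (![sg Ns * (0:E 3) 0 + Ms * (a/2), sg Ms * (0:E 3) 1 + Ns * (b/2),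
      sg (Ms + Ns) * (0:E 3) 2 + Ns * (c/2) + Ks * c] : Fin 3 → ℝ) = ((0 : E 3) + (2:ℝ) • v).ofLp := by
    rw [← hs 0, hform 0]
  have key1 : (![sg Ns * q 0 + Ms * (a/2), sg Ms * q 1 + Ns * (b/2),
      sg (Ms + Ns) * q 2 + Ns * (c/2) + Ks * c] : Fin 3 → ℝ) = (q + (2:ℝ) • v).ofLp := by
    rw [← hs q, hform q]
  have k00 : Ms * (a/2) = 2 * v 0 := by
    have h9 := congrFun key0 0; simpa using h9
  have k01 : Ns * (b/2) = 2 * v 1 := by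
    have h9 := congrFun key0 1; simpa using h9
  have k02 : Ns * (c/2) + Ks * c = 2 * v 2 := by
    have h9 := congrFun key0 2; simpa using h9
  have k10 : sg Ns + Ms * (a/2) = 1 + 2 * v 0 := by
    have h9 := congrFun key1 0; rw [hq] at h9; simpa using h9
  have k11 : sg Ms + Ns * (b/2) = 1 + 2 * v 1 := by
    have h9 := congrFun key1 1; rw [hq] at h9; simpa using h9
  have hNs : Even Ns := by
    have h1 : sg Ns = 1 := by linarith
    by_contra h
    rw [sg_odd (Int.not_even_iff_odd.mp h)] at h1
    norm_num at h1
  have hMs : Even Ms := by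
    have h1 : sg Ms = 1 := by linarith
    by_contra h
    rw [sg_odd (Int.not_even_iff_odd.mp h)] at h1
    norm_num at h1
  obtain ⟨P, hP⟩ := hMs
  obtain ⟨Q, hQ⟩ := hNs
  have hv0 : v 0 = (P : ℝ) * (a/2) := by
    rw [hP] at k00; push_cast at k00; linarith
  have hv1 : v 1 = (Q : ℝ) * (b/2) := by
    rw [hQ] at k01; push_cast at k01; linarith
  have hv2 : v 2 = ((Q + Ks : ℤ) : ℝ) * (c/2) := by
    rw [hQ] at k02; push_cast; push_cast at k02; linarith
  set R : ℤ := Q + Ks with hR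
  -- translation generators
  obtain ⟨wa, hwa⟩ : ∃ w : E 3, w = WithLp.toLp 2 ![a,0,0] := ⟨_, rfl⟩
  obtain ⟨wb, hwb⟩ : ∃ w : E 3, w = WithLp.toLp 2 ![0,b,0] := ⟨_, rfl⟩
  obtain ⟨wc, hwc⟩ : ∃ w : E 3, w = WithLp.toLp 2 ![0,0,-c] := ⟨_, rfl⟩
  have hA2 : ∀ x : E 3, (α ^ 2) x = x + wa := by
    intro x
    rw [pow_two]
    show α (α x) = _
    apply WithLp.ofLp_injective
    rw [hα, hα x, hwa]
    funext i
    fin_cases i <;> simp <;> ring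
  have hB2 : ∀ x : E 3, (β ^ 2) x = x + wb := by
    intro x
    rw [pow_two]
    show β (β x) = _
    apply WithLp.ofLp_injective
    rw [hβ, hβ x, hwb]
    funext i
    fin_cases i <;> simp <;> ring
  have hAB : ∀ x : E 3, (α * β) x = ![a/2 - x 0, -(x 1) - b/2, x 2 - c/2] := by
    intro x
    show (α (β x)).ofLp = _
    rw [hα, hβ x]
    funext i
    fin_cases i <;> simp <;> ring
  have hAB2 : ∀ x : E 3, ((α * β) ^ 2) x = x + wc := by
    intro x
    rw [pow_two]
    show (α * β) ((α * β) x) = _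
    apply WithLp.ofLp_injective
    rw [hAB, hAB x, hwc]
    funext i
    fin_cases i <;> simp <;> ring
  have hainv : ∀ u : E 3, α⁻¹ u = ![u 0 - a/2, -(u 1), -(u 2)] := by
    intro u
    have key : α (WithLp.toLp 2 ![u 0 - a/2, -(u 1), -(u 2)]) = u := by
      apply WithLp.ofLp_injective
      rw [hα]
      funext i
      fin_cases i <;> simp
    show (α.symm u).ofLp = _
    conv_lhs => rw [← key]
    rw [IsometryEquiv.symm_apply_apply]
  -- case analysis on the parities of P, Q, R
  rcases Int.even_or_odd P with hPe | ⟨j, hj⟩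
  rotate_left
  · -- P odd : γ = (α²)^(-j) * (α⁻¹ * τ)
    refine ⟨(α ^ 2) ^ (-j) * (α⁻¹ * τ), ?_, ?_, ?_⟩
    · exact mul_mem (zpow_mem (pow_mem hαG 2) _) (mul_mem (inv_mem hαG) hτG)
    all_goals
      have hγ : ∀ x : E 3, ((α ^ 2) ^ (-j) * (α⁻¹ * τ)) x
          = ![x 0, -(x 1) - v 1, -(x 2) - v 2] := by
        intro x
        show (((α ^ 2) ^ (-j)) (α⁻¹ (τ x))).ofLp = _
        rw [transl_zpow hA2, WithLp.ofLp_add, hτ x, hainv]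
        funext i
        fin_cases i <;>
          simp [hv0, hj, hwa] <;> push_cast <;> ring
    · -- nontrivial
      intro heq
      have h7 := hγ (WithLp.toLp 2 ![0, 1 - v 1 / 2, 0])
      rw [heq] at h7
      have h8 := congrFun h7 1
      simp at h8
      linarith
    · -- fixed point
      refine ⟨WithLp.toLp 2 ![0, -(v 1)/2, -(v 2)/2], ?_⟩
      apply WithLp.ofLp_injective
      rw [hγ]
      funext i
      fin_cases i <;> simp <;> ring
  rcases Int.even_or_odd Q with hQe | ⟨t, ht⟩
  rotate_left
  · -- Q odd : γ = (β²)^(-(t+1)) * (β * τ)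
    refine ⟨(β ^ 2) ^ (-(t+1)) * (β * τ), ?_, ?_, ?_⟩
    · exact mul_mem (zpow_mem (pow_mem hβG 2) _) (mul_mem hβG hτG)
    all_goals
      have hγ : ∀ x : E 3, ((β ^ 2) ^ (-(t+1)) * (β * τ)) x
          = ![-(x 0) - v 0, x 1, c/2 - v 2 - x 2] := by
        intro x
        show (((β ^ 2) ^ (-(t+1))) (β (τ x))).ofLp = _
        rw [transl_zpow hB2, WithLp.ofLp_add, hτ x, hβ]
        funext i
        fin_cases i <;>
          simp [hv1, ht, hwb] <;> push_cast <;> ring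
    · intro heq
      have h7 := hγ (WithLp.toLp 2 ![1 - v 0 / 2, 0, 0])
      rw [heq] at h7
      have h8 := congrFun h7 0
      simp at h8
      linarith
    · refine ⟨WithLp.toLp 2 ![-(v 0)/2, 0, c/4 - v 2 / 2], ?_⟩
      apply WithLp.ofLp_injective
      rw [hγ]
      funext i
      fin_cases i <;> simp <;> ring
  rcases Int.even_or_odd R with hRe | ⟨k, hk⟩
  rotate_left
  · -- R odd : γ = ((αβ)²)^k * ((αβ) * τ)
    refine ⟨((α * β) ^ 2) ^ k * ((α * β) * τ), ?_, ?_, ?_⟩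
    · exact mul_mem (zpow_mem (pow_mem (mul_mem hαG hβG) 2) _)
        (mul_mem (mul_mem hαG hβG) hτG)
    all_goals
      have hγ : ∀ x : E 3, (((α * β) ^ 2) ^ k * ((α * β) * τ)) x
          = ![a/2 - v 0 - x 0, -(x 1) - v 1 - b/2, x 2] := by
        intro x
        show ((((α * β) ^ 2) ^ k) ((α * β) (τ x))).ofLp = _
        rw [transl_zpow hAB2, WithLp.ofLp_add, hτ x, hAB]
        funext i
        fin_cases i <;>
          simp [hv2, hk, hwc] <;> push_cast <;> ring
    · intro heq
      have h7 := hγ (WithLp.toLp 2 ![a/4 - v 0 / 2 + 1, 0, 0])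
      rw [heq] at h7
      have h8 := congrFun h7 0
      simp at h8
      linarith
    · refine ⟨WithLp.toLp 2 ![a/4 - v 0 / 2, -(v 1)/2 - b/4, 0], ?_⟩
      apply WithLp.ofLp_injective
      rw [hγ]
      funext i
      fin_cases i <;> simp <;> ring
  · -- all even: v ∈ Λ, so τ ∈ Γ, contradiction
    exfalso
    obtain ⟨p', hp'⟩ := hPe
    obtain ⟨q', hq'⟩ := hQe
    obtain ⟨r', hr'⟩ := hRe
    have hτeq : τ = (α ^ 2) ^ p' * ((β ^ 2) ^ q' * ((α * β) ^ 2) ^ (-r')) := by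
      apply IsometryEquiv.ext
      intro x
      show τ x = ((α ^ 2) ^ p') (((β ^ 2) ^ q') ((((α * β) ^ 2) ^ (-r')) x))
      rw [hτ x, transl_zpow hAB2, transl_zpow hB2, transl_zpow hA2]
      apply WithLp.ofLp_injective
      funext i
      fin_cases i <;>
        simp [hv0, hv1, hv2, hp', hq', hr', hwa, hwb, hwc] <;> push_cast <;> ring
    apply hv
    rw [hτeq]
    exact mul_mem (zpow_mem (pow_mem hαΓ 2) _)
      (mul_mem (zpow_mem (pow_mem hβΓ 2) _) (zpow_mem (pow_mem (mul_mem hαΓ hβΓ) 2) _))
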